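/- Let X be a space. If X does not have Property (T), then X is amenable. -/

import Mathlib

open scoped ENNReal Classical

noncomputable section

namespace GeomPropT

variable {X : Type*}

/-- The tube of diameter `R` in `X × X`. -/
def Tube (X : Type*) [EMetricSpace X] (R : ℝ≥0∞) : Set (X × X) :=
  {p : X × X | edist p.1 p.2 ≤ R}

/-- A subset of `X × X` is controlled if it is contained in a tube of finite diameter. -/
def Controlled [EMetricSpace X] (E : Set (X × X)) : Prop :=
  ∃ R : ℝ≥0∞, R < ⊤ ∧ E ⊆ Tube X R

/-- `X` has bounded geometry if balls of any given finite radius have uniformly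
bounded cardinality. -/
def BoundedGeometry (X : Type*) [EMetricSpace X] : Prop :=
  ∀ R : ℝ≥0∞, R < ⊤ → ∃ N : ℕ, ∀ x : X,
    {y : X | edist x y ≤ R}.Finite ∧ {y : X | edist x y ≤ R}.ncard ≤ N

/-- Composition of subsets of `X × X`. -/
def compRel (E F : Set (X × X)) : Set (X × X) :=
  {p : X × X | ∃ z : X, (p.1, z) ∈ E ∧ (z, p.2) ∈ F}

/-- `compPow E n` is the `(n+1)`-fold composition `E^{∘(n+1)}`. -/
def compPow (E : Set (X × X)) : ℕ → Set (X × X)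
  | 0 => E
  | n + 1 => compRel E (compPow E n)

/-- A controlled set is generating if every controlled set is contained in some
iterated composition of it. -/
def Generating [EMetricSpace X] (E : Set (X × X)) : Prop :=
  Controlled E ∧ ∀ F : Set (X × X), Controlled F → ∃ n : ℕ, F ⊆ compPow E n

/-- `X` is monogenic if it admits a controlled generating set. -/
def Monogenic (X : Type*) [EMetricSpace X] : Prop :=
  ∃ E : Set (X × X), Generating E

/-- A "space": bounded geometry, monogenic, with at most countably many coarse
components. -/
structure IsSpace (X : Type*) [EMetricSpace X] : Prop where
  boundedGeometry : BoundedGeometry X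
  monogenic : Monogenic X
  countableComponents : Set.Countable {C : Set X | ∃ x : X, C = {y : X | edist x y < ⊤}}

/-- The support of a matrix. -/
def matSupport (T : X → X → ℂ) : Set (X × X) := {p : X × X | T p.1 p.2 ≠ 0}

/-- Membership in `ℂ_u[X]`: uniformly bounded entries and controlled support. -/
def CuElem [EMetricSpace X] (T : X → X → ℂ) : Prop :=
  (∃ M : ℝ, ∀ x y : X, ‖T x y‖ ≤ M) ∧ Controlled (matSupport T)

/-- The identity matrix. -/
def matOne : X → X → ℂ := fun x y => if x = y then 1 else 0

/-- Matrix multiplication. -/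
def matMul (T S : X → X → ℂ) : X → X → ℂ := fun x y => ∑' z : X, T x z * S z y

/-- Matrix adjoint. -/
def matStar (T : X → X → ℂ) : X → X → ℂ := fun x y => starRingEnd ℂ (T y x)

/-- Matrix powers. -/
def matPow (A : X → X → ℂ) : ℕ → X → X → ℂ
  | 0 => matOne
  | n + 1 => matMul A (matPow A n)

/-- A function `f ∈ ℓ∞(X)` viewed as a diagonal matrix. -/
def diag (f : X → ℂ) : X → X → ℂ := fun x y => if x = y then f x else 0

/-- The matrix of a partial translation: a `{0,1}`-matrix with at most one `1` in
each row and each column, and controlled support. -/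
def IsPartialTranslation [EMetricSpace X] (v : X → X → ℂ) : Prop :=
  (∀ x y : X, v x y = 0 ∨ v x y = 1) ∧
  (∀ x y y' : X, v x y = 1 → v x y' = 1 → y = y') ∧
  (∀ x x' y : X, v x y = 1 → v x' y = 1 → x = x') ∧
  Controlled (matSupport v)

/-- Membership in `S_X`: finite propagation permutation matrices. -/
def IsPermMatrix [EMetricSpace X] (A : X → X → ℂ) : Prop :=
  (∀ x y : X, A x y = 0 ∨ A x y = 1) ∧
  (∀ x : X, ∃! y : X, A x y = 1) ∧
  (∀ y : X, ∃! x : X, A x y = 1) ∧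
  Controlled (matSupport A)

/-- Membership in `A_X` with common row/column sum `c`. -/
def MemAX [EMetricSpace X] (A : X → X → ℂ) (c : ℂ) : Prop :=
  CuElem A ∧ ∀ x : X, HasSum (fun y => A x y) c ∧ HasSum (fun y => A y x) c

variable {H : Type*} [NormedAddCommGroup H] [InnerProductSpace ℂ H]

/-- A representation of `ℂ_u[X]`: a unital `*`-homomorphism into `B(H)`. -/
structure IsRepresentation [EMetricSpace X] [CompleteSpace H]
    (π : (X → X → ℂ) → (H →L[ℂ] H)) : Prop where
  map_one : π matOne = 1
  map_add : ∀ T S : X → X → ℂ, CuElem T → CuElem S → π (T + S) = π T + π S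
  map_smul : ∀ (c : ℂ) (T : X → X → ℂ), CuElem T → π (c • T) = c • π T
  map_mul : ∀ T S : X → X → ℂ, CuElem T → CuElem S → π (matMul T S) = π T * π S
  map_star : ∀ T : X → X → ℂ, CuElem T → π (matStar T) = ContinuousLinearMap.adjoint (π T)

/-- The subspace `H^π` of invariant vectors. -/
def invariantSubmodule [EMetricSpace X] (π : (X → X → ℂ) → (H →L[ℂ] H)) :
    Submodule ℂ H where
  carrier := {ξ : H | ∀ v : X → X → ℂ, IsPartialTranslation v →
    π v ξ = π (matMul v (matStar v)) ξ}
  add_mem' := by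
    intro a b ha hb v hv
    simp only [map_add, ha v hv, hb v hv]
  zero_mem' := by
    intro v hv
    simp
  smul_mem' := by
    intro c ξ hξ v hv
    simp only [map_smul, hξ v hv]

/-- `p` is the orthogonal projection onto `S`. -/
def IsOrthoProjOnto (p : H →L[ℂ] H) (S : Submodule ℂ H) : Prop :=
  ∀ ξ : H, p ξ ∈ S ∧ ξ - p ξ ∈ Sᗮ

/-- Geometric Property (T). -/
def HasPropertyT (X : Type*) [EMetricSpace X] : Prop :=
  ∀ E : Set (X × X), Generating E →
    ∃ c : ℝ, 0 < c ∧
      ∀ (H : Type) [NormedAddCommGroup H] [InnerProductSpace ℂ H] [CompleteSpace H]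
        (π : (X → X → ℂ) → (H →L[ℂ] H)), IsRepresentation π →
        ∀ ξ ∈ (invariantSubmodule π)ᗮ,
          ∃ v : X → X → ℂ, IsPartialTranslation v ∧ matSupport v ⊆ E ∧
            c * ‖ξ‖ ≤ ‖π v ξ - π (matMul v (matStar v)) ξ‖

/-- Bounded functions (elements of `ℓ∞(X)`). -/
def BddFun (f : X → ℂ) : Prop := ∃ M : ℝ, ∀ x : X, ‖f x‖ ≤ M

/-- `f ∘ t`, extended by `0`, where `t` is the partial translation with matrix `v`. -/
def translateFun (v : X → X → ℂ) (f : X → ℂ) : X → ℂ := fun y => ∑' x : X, v x y * f x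

/-- An invariant mean on `ℓ∞(X)`: a positive unital linear functional invariant
under partial translations. -/
def IsInvariantMean [EMetricSpace X] (φ : (X → ℂ) → ℂ) : Prop :=
  (∀ f g : X → ℂ, BddFun f → BddFun g → φ (f + g) = φ f + φ g) ∧
  (∀ (c : ℂ) (f : X → ℂ), BddFun f → φ (c • f) = c * φ f) ∧
  φ (fun _ => 1) = 1 ∧
  (∀ f : X → ℂ, BddFun f → (∀ x, 0 ≤ (f x).re ∧ (f x).im = 0) →
    0 ≤ (φ f).re ∧ (φ f).im = 0) ∧
  (∀ f : X → ℂ, BddFun f → ∀ v : X → X → ℂ, IsPartialTranslation v →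
    (∀ x : X, f x ≠ 0 → ∃ y : X, v x y = 1) → φ (translateFun v f) = φ f)

/-- `X` is amenable if `ℓ∞(X)` admits an invariant mean. -/
def IsAmenable (X : Type*) [EMetricSpace X] : Prop :=
  ∃ φ : (X → ℂ) → ℂ, IsInvariantMean φ

/-- A representation of `ℂ_u[X]` bundled with its Hilbert space. -/
structure HilbertRep (X : Type*) [EMetricSpace X] where
  H : Type
  [nacg : NormedAddCommGroup H]
  [ips : InnerProductSpace ℂ H]
  [cs : CompleteSpace H]
  π : (X → X → ℂ) → (H →L[ℂ] H)
  rep : IsRepresentation π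

attribute [instance] HilbertRep.nacg HilbertRep.ips HilbertRep.cs

section Basic

set_option linter.unusedSectionVars false

variable {X : Type*} [EMetricSpace X]

lemma controlled_mono {E F : Set (X × X)} (h : E ⊆ F) (hF : Controlled F) : Controlled E := by
  obtain ⟨R, hR, hsub⟩ := hF
  exact ⟨R, hR, fun p hp => hsub (h hp)⟩

lemma controlled_union {E F : Set (X × X)} (hE : Controlled E) (hF : Controlled F) :
    Controlled (E ∪ F) := by
  obtain ⟨R, hR, hsubR⟩ := hE
  obtain ⟨S, hS, hsubS⟩ := hF
  refine ⟨max R S, max_lt hR hS, fun p hp => ?_⟩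
  rcases hp with hp | hp
  · exact le_trans (show edist p.1 p.2 ≤ R from hsubR hp) (le_max_left R S)
  · exact le_trans (show edist p.1 p.2 ≤ S from hsubS hp) (le_max_right R S)

lemma controlled_compRel {E F : Set (X × X)} (hE : Controlled E) (hF : Controlled F) :
    Controlled (compRel E F) := by
  obtain ⟨R, hR, hsubR⟩ := hE
  obtain ⟨S, hS, hsubS⟩ := hF
  refine ⟨R + S, ENNReal.add_lt_top.2 ⟨hR, hS⟩, fun p hp => ?_⟩
  obtain ⟨z, h1, h2⟩ := hp
  calc edist p.1 p.2 ≤ edist p.1 z + edist z p.2 := edist_triangle _ _ _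
    _ ≤ R + S := add_le_add (hsubR h1) (hsubS h2)

lemma controlled_compPow {E : Set (X × X)} (hE : Controlled E) (n : ℕ) :
    Controlled (compPow E n) := by
  induction n with
  | zero => exact hE
  | succ n ih => exact controlled_compRel hE ih

/-- The set of rows of `v` containing a `1`. -/
def rowSet (v : X → X → ℂ) : Set X := {x | ∃ y, v x y = 1}

/-- Characteristic function of a set. -/
def chi (S : Set X) : X → ℂ := fun x => if x ∈ S then 1 else 0

/-- Diagonal projection matrix. -/
def diagProj (S : Set X) : X → X → ℂ := diag (chi S)

lemma matMul_diag_right (T : X → X → ℂ) (f : X → ℂ) :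
    matMul T (diag f) = fun x y => T x y * f y := by
  funext x y
  have : ∀ z, z ≠ y → T x z * diag f z y = 0 := by
    intro z hz
    simp [diag, hz, mul_comm]
  simpa [matMul, diag] using tsum_eq_single y this

lemma matMul_diag_left (f : X → ℂ) (T : X → X → ℂ) :
    matMul (diag f) T = fun x y => f x * T x y := by
  funext x y
  have : ∀ z, z ≠ x → diag f x z * T z y = 0 := by
    intro z hz
    simp [diag, Ne.symm hz]
  simpa [matMul, diag] using tsum_eq_single x this

lemma diag_mul_diag (f g : X → ℂ) :
    matMul (diag f) (diag g) = diag (fun x => f x * g x) := by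
  rw [matMul_diag_left]
  funext x y
  by_cases h : x = y <;> simp [diag, h]

lemma matStar_diag (f : X → ℂ) :
    matStar (diag f) = diag (fun x => starRingEnd ℂ (f x)) := by
  funext x y
  by_cases h : x = y
  · subst h; simp [matStar, diag]
  · simp [matStar, diag, h, Ne.symm h]

lemma matStar_matStar (T : X → X → ℂ) : matStar (matStar T) = T := by
  funext x y
  simp [matStar]

lemma cuElem_zero : CuElem (0 : X → X → ℂ) := by
  refine ⟨⟨0, by simp⟩, 0, by simp, fun p hp => ?_⟩
  simp [matSupport] at hp

lemma cuElem_add {T S : X → X → ℂ} (hT : CuElem T) (hS : CuElem S) : CuElem (T + S) := by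
  obtain ⟨⟨M, hM⟩, hTc⟩ := hT
  obtain ⟨⟨M', hM'⟩, hSc⟩ := hS
  refine ⟨⟨M + M', fun x y => ?_⟩, ?_⟩
  · calc ‖(T + S) x y‖ ≤ ‖T x y‖ + ‖S x y‖ := by
          simpa using norm_add_le (T x y) (S x y)
      _ ≤ M + M' := add_le_add (hM x y) (hM' x y)
  · refine controlled_mono ?_ (controlled_union hTc hSc)
    intro p hp
    by_cases h : T p.1 p.2 = 0
    · right; simp only [matSupport, Set.mem_setOf_eq] at hp ⊢
      intro hc; apply hp; simp [Pi.add_apply, h, hc]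
    · left; exact h

lemma cuElem_diag {f : X → ℂ} (hf : ∃ M, ∀ x, ‖f x‖ ≤ M) : CuElem (diag f) := by
  obtain ⟨M, hM⟩ := hf
  refine ⟨⟨max M 0, fun x y => ?_⟩, 0, by simp, fun p hp => ?_⟩
  · by_cases h : x = y
    · simp only [diag, if_pos h]
      exact le_trans (hM x) (le_max_left _ _)
    · simp [diag, h]
  · simp only [matSupport, Set.mem_setOf_eq, diag] at hp
    by_cases h : p.1 = p.2
    · simp [Tube, h]
    · simp [h] at hp

lemma cuElem_diagProj (S : Set X) : CuElem (diagProj S) := by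
  apply cuElem_diag
  refine ⟨1, fun x => ?_⟩
  by_cases h : x ∈ S <;> simp [chi, h]

lemma matStar_diagProj (S : Set X) : matStar (diagProj S) = diagProj S := by
  funext x y
  by_cases h : x = y
  · subst h
    by_cases hm : x ∈ S <;> simp [matStar, diagProj, diag, chi, hm]
  · simp [matStar, diagProj, diag, chi, h, Ne.symm h]

lemma diagProj_mul_self (S : Set X) : matMul (diagProj S) (diagProj S) = diagProj S := by
  rw [diagProj, diag_mul_diag]
  funext x y
  by_cases h : x = y
  · subst h
    by_cases hm : x ∈ S <;> simp [diag, chi, hm]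
  · simp [diag, h]

lemma cuElem_of_pt {v : X → X → ℂ} (hv : IsPartialTranslation v) : CuElem v := by
  refine ⟨⟨1, fun x y => ?_⟩, hv.2.2.2⟩
  rcases hv.1 x y with h | h <;> simp [h]

lemma pt_zero : IsPartialTranslation (0 : X → X → ℂ) := by
  refine ⟨fun x y => Or.inl rfl, fun x y y' h => by simp at h, fun x x' y h => by simp at h, ?_⟩
  exact cuElem_zero.2

lemma matStar_entry_eq_one {v : X → X → ℂ} (h01 : ∀ x y, v x y = 0 ∨ v x y = 1)
    {x y : X} : matStar v x y = 1 ↔ v y x = 1 := by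
  rcases h01 y x with h | h <;> simp [matStar, h]

lemma pt_star {v : X → X → ℂ} (hv : IsPartialTranslation v) :
    IsPartialTranslation (matStar v) := by
  obtain ⟨h01, hrow, hcol, hc⟩ := hv
  refine ⟨fun x y => ?_, fun x y y' h h' => ?_, fun x x' y h h' => ?_, ?_⟩
  · rcases h01 y x with h | h <;> simp [matStar, h]
  · exact hcol y y' x ((matStar_entry_eq_one h01).1 h) ((matStar_entry_eq_one h01).1 h')
  · exact hrow y x x' ((matStar_entry_eq_one h01).1 h) ((matStar_entry_eq_one h01).1 h')
  · obtain ⟨R, hR, hsub⟩ := hc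
    refine ⟨R, hR, fun p hp => ?_⟩
    have : v p.2 p.1 ≠ 0 := by
      simp only [matSupport, Set.mem_setOf_eq, matStar] at hp
      intro hz; apply hp; simp [hz]
    have := hsub (show (p.2, p.1) ∈ matSupport v from this)
    simpa [Tube, edist_comm] using this

lemma mul_star_self {v : X → X → ℂ} (hv : IsPartialTranslation v) :
    matMul v (matStar v) = diagProj (rowSet v) := by
  obtain ⟨h01, hrow, hcol, _⟩ := hv
  funext x x'
  simp only [matMul, matStar]
  by_cases hx : x ∈ rowSet v
  · obtain ⟨y₀, hy₀⟩ := hx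
    have hzero : ∀ y, y ≠ y₀ → v x y * starRingEnd ℂ (v x' y) = 0 := by
      intro y hy
      rcases h01 x y with h | h
      · simp [h]
      · exact absurd (hrow x y y₀ h hy₀) hy
    rw [tsum_eq_single y₀ hzero, hy₀, one_mul]
    by_cases hxx : x = x'
    · subst hxx
      have hmem : x ∈ rowSet v := ⟨y₀, hy₀⟩
      simp [hy₀, diagProj, diag, chi, hmem]
    · rcases h01 x' y₀ with h | h
      · simp [h, diagProj, diag, chi, hxx]
      · exact absurd (hcol x x' y₀ hy₀ h) hxx
  · have hzero : ∀ y, v x y * starRingEnd ℂ (v x' y) = 0 := by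
      intro y
      rcases h01 x y with h | h
      · simp [h]
      · exact absurd ⟨y, h⟩ hx
    have h1 : ∑' y, v x y * starRingEnd ℂ (v x' y) = 0 := by
      simp only [hzero]; exact tsum_zero
    rw [h1]
    by_cases hxx : x = x'
    · subst hxx; simp [diagProj, diag, chi, hx]
    · simp [diagProj, diag, chi, hxx]

lemma star_mul_self {v : X → X → ℂ} (hv : IsPartialTranslation v) :
    matMul (matStar v) v = diagProj (rowSet (matStar v)) := by
  have := mul_star_self (pt_star hv)
  rwa [matStar_matStar] at this

end Basic

section Rep

set_option linter.unusedSectionVars false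

variable {X : Type*} [EMetricSpace X]
variable {H : Type*} [NormedAddCommGroup H] [InnerProductSpace ℂ H] [CompleteSpace H]
variable {π : (X → X → ℂ) → (H →L[ℂ] H)}

local notation "⟪" x ", " y "⟫" => @inner ℂ _ _ x y

lemma cuElem_one : CuElem (matOne : X → X → ℂ) := by
  have : (matOne : X → X → ℂ) = diag (fun _ => 1) := rfl
  rw [this]
  exact cuElem_diag ⟨1, fun x => by simp⟩

lemma cuElem_sum {ι : Type*} (s : Finset ι) (T : ι → (X → X → ℂ))
    (hT : ∀ i, CuElem (T i)) : CuElem (∑ i ∈ s, T i) := by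
  classical
  induction s using Finset.induction_on with
  | empty => simpa using cuElem_zero
  | insert a s' h ih =>
    rw [Finset.sum_insert h]
    exact cuElem_add (hT a) ih

lemma pi_zero (hπ : IsRepresentation π) : π 0 = 0 := by
  have h := hπ.map_add 0 0 cuElem_zero cuElem_zero
  have h0 : (0 : X → X → ℂ) + 0 = 0 := by simp
  rw [h0] at h
  have h2 : π 0 + π 0 = π 0 + 0 := by rw [add_zero]; exact h.symm
  exact add_left_cancel h2

lemma le_of_sq_le' {a b : ℝ} (ha : 0 ≤ a) (hb : 0 ≤ b) (h : a ^ 2 ≤ b ^ 2) : a ≤ b := by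
  nlinarith

lemma pi_sum (hπ : IsRepresentation π) {ι : Type*} (s : Finset ι) (T : ι → (X → X → ℂ))
    (hT : ∀ i, CuElem (T i)) : π (∑ i ∈ s, T i) = ∑ i ∈ s, π (T i) := by
  classical
  induction s using Finset.induction_on with
  | empty => simpa using pi_zero hπ
  | insert a s' hmem ih =>
    rw [Finset.sum_insert hmem, Finset.sum_insert hmem, ← ih]
    exact hπ.map_add _ _ (hT a) (cuElem_sum s' T hT)

lemma norm_pi_diagProj_le (hπ : IsRepresentation π) (S : Set X) (ξ : H) :
    ‖π (diagProj S) ξ‖ ≤ ‖ξ‖ := by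
  set A := π (diagProj S) with hA
  have hmul : A * A = A := by
    rw [hA, ← hπ.map_mul _ _ (cuElem_diagProj S) (cuElem_diagProj S), diagProj_mul_self]
  have hadj : ContinuousLinearMap.adjoint A = A := by
    rw [hA, ← hπ.map_star _ (cuElem_diagProj S), matStar_diagProj]
  have hAA : A (A ξ) = A ξ := by
    have := congrArg (fun (B : H →L[ℂ] H) => B ξ) hmul
    simpa [ContinuousLinearMap.mul_apply] using this
  have key : ⟪A ξ, A ξ⟫ = ⟪A ξ, ξ⟫ := by
    calc ⟪A ξ, A ξ⟫ = ⟪A ξ, ContinuousLinearMap.adjoint A ξ⟫ := by rw [hadj]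
      _ = ⟪A (A ξ), ξ⟫ := ContinuousLinearMap.adjoint_inner_right _ _ _
      _ = ⟪A ξ, ξ⟫ := by rw [hAA]
  have h1 : ‖A ξ‖ ^ 2 = Complex.re ⟪A ξ, ξ⟫ := by
    rw [← key]; exact InnerProductSpace.norm_sq_eq_re_inner (𝕜 := ℂ) (A ξ)
  have h2 : Complex.re ⟪A ξ, ξ⟫ ≤ ‖A ξ‖ * ‖ξ‖ := by
    calc Complex.re ⟪A ξ, ξ⟫ ≤ ‖⟪A ξ, ξ⟫‖ := Complex.re_le_norm _
      _ = ‖(⟪A ξ, ξ⟫ : ℂ)‖ := rfl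
      _ ≤ ‖A ξ‖ * ‖ξ‖ := norm_inner_le_norm _ _
  nlinarith [norm_nonneg (A ξ), norm_nonneg ξ]

lemma norm_pi_pt_le (hπ : IsRepresentation π) {v : X → X → ℂ}
    (hv : IsPartialTranslation v) (ξ : H) : ‖π v ξ‖ ≤ ‖ξ‖ := by
  set A := π v with hA
  have hadj : ContinuousLinearMap.adjoint A = π (matStar v) := by
    rw [hA, hπ.map_star v (cuElem_of_pt hv)]
  have hcomp : π (matStar v) * π v = π (diagProj (rowSet (matStar v))) := by
    rw [← star_mul_self hv]
    exact (hπ.map_mul _ _ (cuElem_of_pt (pt_star hv)) (cuElem_of_pt hv)).symm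
  have h2 : ContinuousLinearMap.adjoint A (A ξ) = π (diagProj (rowSet (matStar v))) ξ := by
    rw [hadj]
    have := congrArg (fun (B : H →L[ℂ] H) => B ξ) hcomp
    simpa [ContinuousLinearMap.mul_apply] using this
  have key : ⟪A ξ, A ξ⟫ = ⟪π (diagProj (rowSet (matStar v))) ξ, ξ⟫ := by
    calc ⟪A ξ, A ξ⟫ = ⟪ContinuousLinearMap.adjoint A (A ξ), ξ⟫ :=
          (ContinuousLinearMap.adjoint_inner_left _ _ _).symm
      _ = ⟪π (diagProj (rowSet (matStar v))) ξ, ξ⟫ := by rw [h2]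
  have h1 : ‖A ξ‖ ^ 2 = Complex.re ⟪π (diagProj (rowSet (matStar v))) ξ, ξ⟫ := by
    rw [← key]; exact InnerProductSpace.norm_sq_eq_re_inner (𝕜 := ℂ) (A ξ)
  have h3 : Complex.re ⟪π (diagProj (rowSet (matStar v))) ξ, ξ⟫ ≤ ‖ξ‖ * ‖ξ‖ := by
    calc Complex.re ⟪π (diagProj (rowSet (matStar v))) ξ, ξ⟫
        ≤ ‖⟪π (diagProj (rowSet (matStar v))) ξ, ξ⟫‖ := Complex.re_le_norm _
      _ = ‖(⟪π (diagProj (rowSet (matStar v))) ξ, ξ⟫ : ℂ)‖ := rfl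
      _ ≤ ‖π (diagProj (rowSet (matStar v))) ξ‖ * ‖ξ‖ := norm_inner_le_norm _ _
      _ ≤ ‖ξ‖ * ‖ξ‖ :=
          mul_le_mul_of_nonneg_right (norm_pi_diagProj_le hπ _ ξ) (norm_nonneg ξ)
  apply le_of_sq_le' (norm_nonneg _) (norm_nonneg _)
  nlinarith

lemma norm_pi_diag_le (hπ : IsRepresentation π) {f : X → ℂ} {M : ℝ} (hM : 0 ≤ M)
    (hf : ∀ x, ‖f x‖ ≤ M) (ξ : H) : ‖π (diag f) ξ‖ ≤ M * ‖ξ‖ := by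
  classical
  set g : X → ℝ := fun x => Real.sqrt (M ^ 2 - Complex.normSq (f x)) with hg
  have hnsq : ∀ x, Complex.normSq (f x) ≤ M ^ 2 := by
    intro x
    rw [← Complex.sq_norm]
    have := hf x
    nlinarith [norm_nonneg (f x)]
  have hgsq : ∀ x, g x * g x = M ^ 2 - Complex.normSq (f x) := fun x =>
    Real.mul_self_sqrt (by linarith [hnsq x])
  set G : X → X → ℂ := diag (fun x => (g x : ℂ)) with hG
  have hcuG : CuElem G := cuElem_diag ⟨M, fun x => by
    rw [Complex.norm_real, Real.norm_eq_abs, abs_of_nonneg (Real.sqrt_nonneg _)]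
    have h1 := hgsq x
    nlinarith [Complex.normSq_nonneg (f x), Real.sqrt_nonneg (M ^ 2 - Complex.normSq (f x))]⟩
  have hcuD : CuElem (diag f) := cuElem_diag ⟨M, hf⟩
  have hcuDstar : CuElem (matStar (diag f)) := by
    rw [matStar_diag]; exact cuElem_diag ⟨M, fun x => by simpa using hf x⟩
  have hmatid : matMul (matStar (diag f)) (diag f) + matMul G G = ((M : ℂ) ^ 2) • matOne := by
    rw [matStar_diag, diag_mul_diag, hG, diag_mul_diag]
    funext x y
    by_cases h : x = y
    · subst h
      simp only [Pi.add_apply, diag, if_pos rfl, Pi.smul_apply, matOne, smul_eq_mul, mul_one]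
      have h1 : starRingEnd ℂ (f x) * f x = (Complex.normSq (f x) : ℂ) := by
        rw [mul_comm]; exact Complex.mul_conj (f x)
      have h2 : ((g x : ℂ)) * ((g x : ℂ)) = ((M ^ 2 - Complex.normSq (f x) : ℝ) : ℂ) := by
        rw [← Complex.ofReal_mul, hgsq x]
      rw [h1, h2]
      push_cast
      ring
    · simp [diag, h, matOne]
  have hGstar : matStar G = G := by
    have hfun : (fun x => starRingEnd ℂ ((g x : ℂ))) = fun x => ((g x : ℂ)) :=
      funext fun x => Complex.conj_ofReal _
    rw [hG, matStar_diag, hfun]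
  have hπid : π (matMul (matStar (diag f)) (diag f)) + π (matMul G G)
      = ((M : ℂ) ^ 2) • (1 : H →L[ℂ] H) := by
    rw [← hπ.map_add _ _ ?c1 ?c2, hmatid, hπ.map_smul _ _ cuElem_one, hπ.map_one]
    case c1 =>
      rw [matStar_diag, diag_mul_diag]
      exact cuElem_diag ⟨M * M, fun x => by
        rw [norm_mul]
        calc ‖starRingEnd ℂ (f x)‖ * ‖f x‖
            = ‖f x‖ * ‖f x‖ := by rw [Complex.norm_conj]
          _ ≤ M * M := by nlinarith [hf x, norm_nonneg (f x)]⟩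
    case c2 =>
      rw [hG, diag_mul_diag]
      exact cuElem_diag ⟨M * M, fun x => by
        rw [norm_mul, Complex.norm_real, Real.norm_eq_abs, abs_of_nonneg (Real.sqrt_nonneg _)]
        have h1 := hgsq x
        nlinarith [Complex.normSq_nonneg (f x), Real.sqrt_nonneg (M ^ 2 - Complex.normSq (f x))]⟩
  have hDD : ⟪π (matMul (matStar (diag f)) (diag f)) ξ, ξ⟫ = ⟪π (diag f) ξ, π (diag f) ξ⟫ := by
    rw [hπ.map_mul _ _ hcuDstar hcuD]
    have h1 : (π (matStar (diag f)) * π (diag f)) ξ = π (matStar (diag f)) (π (diag f) ξ) :=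
      ContinuousLinearMap.mul_apply _ _ _
    rw [h1, hπ.map_star _ hcuD]
    exact ContinuousLinearMap.adjoint_inner_left _ _ _
  have hadjG : ContinuousLinearMap.adjoint (π G) = π G := by
    rw [← hπ.map_star _ hcuG, hGstar]
  have hGG : ⟪π (matMul G G) ξ, ξ⟫ = ⟪π G ξ, π G ξ⟫ := by
    rw [hπ.map_mul _ _ hcuG hcuG]
    have h1 : (π G * π G) ξ = π G (π G ξ) := ContinuousLinearMap.mul_apply _ _ _
    rw [h1]
    calc ⟪π G (π G ξ), ξ⟫ = ⟪ContinuousLinearMap.adjoint (π G) (π G ξ), ξ⟫ := by rw [hadjG]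
      _ = ⟪π G ξ, π G ξ⟫ := ContinuousLinearMap.adjoint_inner_left _ _ _
  have hsum : ⟪π (diag f) ξ, π (diag f) ξ⟫ + ⟪π G ξ, π G ξ⟫ = ((M : ℂ) ^ 2) * ⟪ξ, ξ⟫ := by
    rw [← hDD, ← hGG, ← inner_add_left]
    have happ : π (matMul (matStar (diag f)) (diag f)) ξ + π (matMul G G) ξ
        = (((M : ℂ) ^ 2) • (1 : H →L[ℂ] H)) ξ := by
      rw [← hπid]; rfl
    rw [happ, ContinuousLinearMap.smul_apply, ContinuousLinearMap.one_apply, inner_smul_left]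
    congr 1
    simp [Complex.conj_ofReal]
  have hre : ‖π (diag f) ξ‖ ^ 2 + ‖π G ξ‖ ^ 2 = M ^ 2 * ‖ξ‖ ^ 2 := by
    have hc := congrArg Complex.re hsum
    rw [Complex.add_re] at hc
    have e1 : Complex.re ⟪π (diag f) ξ, π (diag f) ξ⟫ = ‖π (diag f) ξ‖ ^ 2 :=
      (InnerProductSpace.norm_sq_eq_re_inner (𝕜 := ℂ) _).symm
    have e2 : Complex.re ⟪π G ξ, π G ξ⟫ = ‖π G ξ‖ ^ 2 :=
      (InnerProductSpace.norm_sq_eq_re_inner (𝕜 := ℂ) _).symm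
    rw [e1, e2] at hc
    rw [hc, Complex.mul_re]
    have h4 : Complex.re ⟪ξ, ξ⟫ = ‖ξ‖ ^ 2 := (InnerProductSpace.norm_sq_eq_re_inner (𝕜 := ℂ) ξ).symm
    have h5 : Complex.im ⟪ξ, ξ⟫ = 0 := by
      rw [inner_self_eq_norm_sq_to_K]
      simp [← Complex.ofReal_pow]
    rw [h4, h5]
    simp [← Complex.ofReal_pow]
  apply le_of_sq_le' (norm_nonneg _) (by positivity)
  rw [mul_pow]
  nlinarith [sq_nonneg (‖π G ξ‖)]

end Rep

section Key

set_option linter.unusedSectionVars false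
set_option maxHeartbeats 1000000

variable {X : Type*} [EMetricSpace X]

lemma key_decomp (hBG : BoundedGeometry X) {E F : Set (X × X)}
    (hE : Controlled E) (hF : Controlled F) :
    ∃ N : ℕ, ∀ (H : Type) [NormedAddCommGroup H] [InnerProductSpace ℂ H] [CompleteSpace H]
      (π : (X → X → ℂ) → (H →L[ℂ] H)), IsRepresentation π → ∀ (ξ : H) (ε δ : ℝ),
      (∀ u, IsPartialTranslation u → matSupport u ⊆ E →
        ‖π u ξ - π (matMul u (matStar u)) ξ‖ ≤ ε) →
      (∀ s, IsPartialTranslation s → matSupport s ⊆ F →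
        ‖π s ξ - π (matMul s (matStar s)) ξ‖ ≤ δ) →
      ∀ v, IsPartialTranslation v → matSupport v ⊆ compRel E F →
        ‖π v ξ - π (matMul v (matStar v)) ξ‖ ≤ (N : ℝ) * (ε + δ) := by
  classical
  obtain ⟨RF, hRF, hFsub⟩ := hF
  have hFctrl : Controlled F := ⟨RF, hRF, hFsub⟩
  obtain ⟨N0, hN0⟩ := hBG RF hRF
  refine ⟨N0 + 1, ?_⟩
  intro H _ _ _ π hπ ξ ε δ hEbd hFbd v hv hvsub
  have hvPT := hv
  obtain ⟨h01, hrow, hcol, hctrl⟩ := hv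
  set dom : X → Prop := fun y => ∃ x, v x y = 1 with hdomdef
  have hex : ∀ y, ∃ x, dom y → v x y = 1 := by
    intro y
    by_cases h : dom y
    · obtain ⟨x, hx⟩ := h
      exact ⟨x, fun _ => hx⟩
    · exact ⟨y, fun hc => absurd hc h⟩
  choose tx htx using hex
  have hex2 : ∀ y, ∃ z, dom y → (tx y, z) ∈ E ∧ (z, y) ∈ F := by
    intro y
    by_cases h : dom y
    · have h1 : (tx y, y) ∈ matSupport v := by
        simp only [matSupport, Set.mem_setOf_eq, htx y h]
        exact one_ne_zero
      obtain ⟨z, hz1, hz2⟩ := hvsub h1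
      exact ⟨z, fun _ => ⟨hz1, hz2⟩⟩
    · exact ⟨y, fun hc => absurd hc h⟩
  choose zf hzf using hex2
  have htxinj : ∀ y y', dom y → dom y' → tx y = tx y' → y = y' := by
    intro y y' h h' he
    exact hrow (tx y) y y' (htx y h) (he ▸ htx y' h')
  have hxeq : ∀ x y, v x y = 1 → x = tx y := by
    intro x y h1
    exact hcol x (tx y) y h1 (htx y ⟨x, h1⟩)
  -- fibers
  have hfibfin : ∀ w, ({y | dom y ∧ zf y = w}).Finite ∧ ({y | dom y ∧ zf y = w}).ncard ≤ N0 := by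
    intro w
    have hsub2 : {y | dom y ∧ zf y = w} ⊆ {y | edist w y ≤ RF} := by
      rintro y ⟨hy, hzy⟩
      have h2 := (hzf y hy).2
      have h3 : edist (zf y) y ≤ RF := hFsub h2
      rw [hzy] at h3
      exact h3
    exact ⟨(hN0 w).1.subset hsub2,
      le_trans (Set.ncard_le_ncard hsub2 (hN0 w).1) (hN0 w).2⟩
  -- index function via a well-order
  have hwo : IsWellOrder X WellOrderingRel := WellOrderingRel.isWellOrder
  haveI := hwo
  set r : X → X → Prop := WellOrderingRel with hrdef
  set ι : X → ℕ := fun y => ({y' | (dom y' ∧ zf y' = zf y) ∧ r y' y}).ncard with hιdef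
  have hιlt : ∀ y, dom y → ι y < N0 + 1 := by
    intro y hy
    have hsub2 : {y' | (dom y' ∧ zf y' = zf y) ∧ r y' y} ⊆ {y' | dom y' ∧ zf y' = zf y} :=
      fun y' h => h.1
    have h1 := Set.ncard_le_ncard hsub2 (hfibfin (zf y)).1
    exact lt_of_le_of_lt (le_trans h1 (hfibfin (zf y)).2) (Nat.lt_succ_self N0)
  haveI hirr : IsIrrefl X r := inferInstance
  have hιinj : ∀ y y', dom y → dom y' → zf y = zf y' → ι y = ι y' → y = y' := by
    intro y y' hy hy' hzz hιι
    by_contra hne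
    have key2 : ∀ a b, dom a → dom b → zf a = zf b → r a b → ι a < ι b := by
      intro a b ha hb hzab hrab
      have hss : {y' | (dom y' ∧ zf y' = zf a) ∧ r y' a} ⊂ {y' | (dom y' ∧ zf y' = zf b) ∧ r y' b} := by
        constructor
        · rintro c ⟨⟨hc1, hc2⟩, hc3⟩
          exact ⟨⟨hc1, hc2.trans hzab⟩, IsTrans.trans c a b hc3 hrab⟩
        · intro hsub2
          have hmem : a ∈ {y' | (dom y' ∧ zf y' = zf b) ∧ r y' b} := ⟨⟨ha, hzab⟩, hrab⟩
          exact (irrefl_of r a) (hsub2 hmem).2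
      exact Set.ncard_lt_ncard hss (((hfibfin (zf b)).1).subset (fun c h => h.1))
    rcases trichotomous_of r y y' with h | h | h
    · exact absurd hιι (ne_of_lt (key2 y y' hy hy' hzz h))
    · exact hne h
    · exact absurd hιι.symm (ne_of_lt (key2 y' y hy' hy hzz.symm h))
  -- the pieces
  set vi : ℕ → X → X → ℂ := fun i x y => if dom y ∧ ι y = i ∧ x = tx y then 1 else 0 with hvidef
  set si : ℕ → X → X → ℂ := fun i z y => if dom y ∧ ι y = i ∧ z = zf y then 1 else 0 with hsidef
  set ui : ℕ → X → X → ℂ :=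
    fun i x z => if ∃ y, dom y ∧ ι y = i ∧ z = zf y ∧ x = tx y then 1 else 0 with huidef
  have hone : ∀ (c : Prop) [Decidable c], (if c then (1:ℂ) else 0) = 1 → c := by
    intro c _ hc
    by_contra hno
    rw [if_neg hno] at hc
    exact zero_ne_one hc
  have h01' : ∀ (c : Prop) [Decidable c], (if c then (1:ℂ) else 0) = 0 ∨ (if c then (1:ℂ) else 0) = 1 := by
    intro c _
    by_cases h : c
    · right; exact if_pos h
    · left; exact if_neg h
  have hne0 : ∀ (c : Prop) [Decidable c], (if c then (1:ℂ) else 0) ≠ 0 → c := by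
    intro c _ hc
    by_contra hno
    exact hc (if_neg hno)
  -- partial translations
  have hvi_pt : ∀ i, IsPartialTranslation (vi i) := by
    intro i
    refine ⟨fun x y => h01' _, ?_, ?_, ?_⟩
    · intro x y y' h h'
      obtain ⟨hd, hi, hx⟩ := hone _ h
      obtain ⟨hd', hi', hx'⟩ := hone _ h'
      exact htxinj y y' hd hd' (hx ▸ hx' ▸ rfl)
    · intro x x' y h h'
      obtain ⟨hd, hi, hx⟩ := hone _ h
      obtain ⟨hd', hi', hx'⟩ := hone _ h'
      rw [hx, hx']
    · refine controlled_mono ?_ hctrl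
      rintro ⟨x, y⟩ hp
      have hp' : vi i x y ≠ 0 := hp
      obtain ⟨hd, hi, hx⟩ := hne0 _ hp'
      show v x y ≠ 0
      rw [hx, htx y hd]
      exact one_ne_zero
  have hsi_pt : ∀ i, IsPartialTranslation (si i) := by
    intro i
    refine ⟨fun x y => h01' _, ?_, ?_, ?_⟩
    · intro z y y' h h'
      obtain ⟨hd, hi, hz⟩ := hone _ h
      obtain ⟨hd', hi', hz'⟩ := hone _ h'
      exact hιinj y y' hd hd' (hz ▸ hz' ▸ rfl) (hi.trans hi'.symm)
    · intro z z' y h h'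
      obtain ⟨hd, hi, hz⟩ := hone _ h
      obtain ⟨hd', hi', hz'⟩ := hone _ h'
      rw [hz, hz']
    · refine controlled_mono ?_ hFctrl
      rintro ⟨z, y⟩ hp
      have hp' : si i z y ≠ 0 := hp
      obtain ⟨hd, hi, hz⟩ := hne0 _ hp'
      show (z, y) ∈ F
      rw [hz]
      exact (hzf y hd).2
  have hsisub : ∀ i, matSupport (si i) ⊆ F := by
    intro i
    rintro ⟨z, y⟩ hp
    have hp' : si i z y ≠ 0 := hp
    obtain ⟨hd, hi, hz⟩ := hne0 _ hp'
    show (z, y) ∈ F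
    rw [hz]
    exact (hzf y hd).2
  have hui_pt : ∀ i, IsPartialTranslation (ui i) := by
    intro i
    refine ⟨fun x y => h01' _, ?_, ?_, ?_⟩
    · intro x z z' h h'
      obtain ⟨y, hd, hi, hz, hx⟩ := hone _ h
      obtain ⟨y', hd', hi', hz', hx'⟩ := hone _ h'
      have : y = y' := htxinj y y' hd hd' (hx ▸ hx' ▸ rfl)
      rw [hz, hz', this]
    · intro x x' z h h'
      obtain ⟨y, hd, hi, hz, hx⟩ := hone _ h
      obtain ⟨y', hd', hi', hz', hx'⟩ := hone _ h'
      have : y = y' := hιinj y y' hd hd' (hz ▸ hz' ▸ rfl) (hi.trans hi'.symm)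
      rw [hx, hx', this]
    · refine controlled_mono ?_ hE
      rintro ⟨x, z⟩ hp
      have hp' : ui i x z ≠ 0 := hp
      obtain ⟨y, hd, hi, hz, hx⟩ := hne0 _ hp'
      show (x, z) ∈ E
      rw [hx, hz]
      exact (hzf y hd).1
  have huisub : ∀ i, matSupport (ui i) ⊆ E := by
    intro i
    rintro ⟨x, z⟩ hp
    have hp' : ui i x z ≠ 0 := hp
    obtain ⟨y, hd, hi, hz, hx⟩ := hne0 _ hp'
    show (x, z) ∈ E
    rw [hx, hz]
    exact (hzf y hd).1
  -- product decomposition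
  have hmulus : ∀ i, matMul (ui i) (si i) = vi i := by
    intro i
    funext x y
    simp only [matMul]
    by_cases hy : dom y ∧ ι y = i
    · have hz0 : ∀ z, z ≠ zf y → ui i x z * si i z y = 0 := by
        intro z hz
        have h0 : si i z y = 0 := by
          rw [hsidef]
          refine if_neg ?_
          rintro ⟨_, _, hzy⟩
          exact hz hzy
        rw [h0, mul_zero]
      rw [tsum_eq_single (zf y) hz0]
      have hsy : si i (zf y) y = 1 := by
        rw [hsidef]; exact if_pos ⟨hy.1, hy.2, rfl⟩
      rw [hsy, mul_one]
      by_cases hx : x = tx y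
      · have h1 : ui i x (zf y) = 1 := by
          rw [huidef]; exact if_pos ⟨y, hy.1, hy.2, rfl, hx⟩
        rw [h1, hvidef]
        exact (if_pos ⟨hy.1, hy.2, hx⟩).symm
      · have h0 : ui i x (zf y) = 0 := by
          rw [huidef]
          refine if_neg ?_
          rintro ⟨y', hy', hι', hz', hx'⟩
          have : y' = y := hιinj y' y hy' hy.1 hz'.symm (hι'.trans hy.2.symm)
          exact hx (this ▸ hx')
        rw [h0, hvidef]
        exact (if_neg (fun h => hx h.2.2)).symm
    · have hz0 : ∀ z, ui i x z * si i z y = 0 := by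
        intro z
        have h0 : si i z y = 0 := by
          rw [hsidef]
          refine if_neg ?_
          rintro ⟨h1, h2, _⟩
          exact hy ⟨h1, h2⟩
        rw [h0, mul_zero]
      have h1 : (∑' z, ui i x z * si i z y) = 0 := by
        simp only [hz0]
        exact tsum_zero
      rw [h1, hvidef]
      exact (if_neg (fun h => hy ⟨h.1, h.2.1⟩)).symm
  -- row sets
  have hrowvi : ∀ i, rowSet (vi i) = {x | ∃ y, dom y ∧ ι y = i ∧ x = tx y} := by
    intro i
    ext x
    constructor
    · rintro ⟨y, hy⟩
      obtain ⟨hd, hi, hx⟩ := hone _ hy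
      exact ⟨y, hd, hi, hx⟩
    · rintro ⟨y, hd, hi, hx⟩
      refine ⟨y, ?_⟩
      rw [hvidef]
      exact if_pos ⟨hd, hi, hx⟩
  have hrowui : ∀ i, rowSet (ui i) = {x | ∃ y, dom y ∧ ι y = i ∧ x = tx y} := by
    intro i
    ext x
    constructor
    · rintro ⟨z, hz⟩
      obtain ⟨y, hd, hi, hzz, hx⟩ := hone _ hz
      exact ⟨y, hd, hi, hx⟩
    · rintro ⟨y, hd, hi, hx⟩
      refine ⟨zf y, ?_⟩
      rw [huidef]
      exact if_pos ⟨y, hd, hi, rfl, hx⟩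
  have hvv_uu : ∀ i, matMul (vi i) (matStar (vi i)) = matMul (ui i) (matStar (ui i)) := by
    intro i
    rw [mul_star_self (hvi_pt i), mul_star_self (hui_pt i), hrowvi i, hrowui i]
  -- ui absorbs the projection
  have hus : ∀ i, matMul (ui i) (matMul (si i) (matStar (si i))) = ui i := by
    intro i
    rw [mul_star_self (hsi_pt i), diagProj, matMul_diag_right]
    funext x z
    by_cases h : ui i x z = 0
    · rw [h, zero_mul]
    · obtain ⟨y, hd, hi, hz, hx⟩ := hne0 _ h
      have hmem : z ∈ rowSet (si i) := by
        refine ⟨y, ?_⟩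
        rw [hsidef]
        exact if_pos ⟨hd, hi, hz⟩
      rw [chi, if_pos hmem, mul_one]
  -- sum decomposition
  have hsum : (∑ i ∈ Finset.range (N0+1), vi i) = v := by
    funext x y
    rw [Finset.sum_apply, Finset.sum_apply]
    by_cases hv1 : v x y = 1
    · have hdy : dom y := ⟨x, hv1⟩
      have hxt : x = tx y := hxeq x y hv1
      have hval : ∀ i, vi i x y = if ι y = i then (1:ℂ) else 0 := by
        intro i
        by_cases hi : ι y = i
        · rw [if_pos hi, hvidef]
          exact if_pos ⟨hdy, hi, hxt⟩
        · rw [if_neg hi, hvidef]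
          exact if_neg (fun h => hi h.2.1)
      rw [Finset.sum_congr rfl (fun i _ => hval i), Finset.sum_ite_eq]
      rw [if_pos (Finset.mem_range.2 (hιlt y hdy))]
      exact hv1.symm
    · have hval : ∀ i, vi i x y = 0 := by
        intro i
        rw [hvidef]
        refine if_neg ?_
        rintro ⟨hdy, hi, hxt⟩
        exact hv1 (hxt ▸ htx y hdy)
      rw [Finset.sum_congr rfl (fun i _ => hval i), Finset.sum_const, smul_zero]
      exact ((h01 x y).resolve_right hv1).symm
  have hsumproj : (∑ i ∈ Finset.range (N0+1), matMul (vi i) (matStar (vi i)))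
      = matMul v (matStar v) := by
    rw [mul_star_self hvPT]
    have hterm : ∀ i, matMul (vi i) (matStar (vi i))
        = diagProj {x | ∃ y, dom y ∧ ι y = i ∧ x = tx y} := by
      intro i
      rw [mul_star_self (hvi_pt i), hrowvi i]
    rw [Finset.sum_congr rfl (fun i _ => hterm i)]
    funext x x'
    rw [Finset.sum_apply, Finset.sum_apply]
    have hdp : ∀ (S : Set X) (a b : X),
        diagProj S a b = if a = b then (if a ∈ S then (1:ℂ) else 0) else 0 := by
      intro S a b
      rfl
    by_cases hxx : x = x'
    · subst hxx
      by_cases hx : x ∈ rowSet v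
      · obtain ⟨y, hvy⟩ := hx
        have hdy : dom y := ⟨x, hvy⟩
        have hxt : x = tx y := hxeq x y hvy
        have hval : ∀ i, diagProj {x | ∃ y, dom y ∧ ι y = i ∧ x = tx y} x x
            = if ι y = i then (1:ℂ) else 0 := by
          intro i
          rw [hdp, if_pos rfl]
          by_cases hi : ι y = i
          · rw [if_pos hi,
              if_pos (show x ∈ {x | ∃ y, dom y ∧ ι y = i ∧ x = tx y} from ⟨y, hdy, hi, hxt⟩)]
          · rw [if_neg hi]
            refine if_neg (fun hmem => ?_)
            obtain ⟨y2, hd2, hi2, hx2⟩ := hmem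
            exact hi ((congrArg ι (htxinj y y2 hdy hd2 (hxt ▸ hx2 ▸ rfl))).trans hi2)
        rw [Finset.sum_congr rfl (fun i _ => hval i), Finset.sum_ite_eq]
        rw [if_pos (Finset.mem_range.2 (hιlt y hdy))]
        rw [hdp, if_pos rfl, if_pos (show x ∈ rowSet v from ⟨y, hvy⟩)]
      · have hval : ∀ i, diagProj {x | ∃ y, dom y ∧ ι y = i ∧ x = tx y} x x = 0 := by
          intro i
          rw [hdp, if_pos rfl]
          refine if_neg (fun hmem => ?_)
          obtain ⟨y2, hd2, hi2, hx2⟩ := hmem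
          exact hx ⟨y2, hx2 ▸ htx y2 hd2⟩
        rw [Finset.sum_congr rfl (fun i _ => hval i), Finset.sum_const, smul_zero]
        rw [hdp, if_pos rfl, if_neg hx]
    · have hval : ∀ i, diagProj {x | ∃ y, dom y ∧ ι y = i ∧ x = tx y} x x' = 0 := by
        intro i
        rw [hdp]
        exact if_neg hxx
      rw [Finset.sum_congr rfl (fun i _ => hval i), Finset.sum_const, smul_zero]
      rw [hdp, if_neg hxx]
  -- apply π
  have e1 : π v = ∑ i ∈ Finset.range (N0+1), π (vi i) := by
    conv_lhs => rw [← hsum]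
    exact pi_sum hπ _ _ (fun i => cuElem_of_pt (hvi_pt i))
  have e2 : π (matMul v (matStar v)) = ∑ i ∈ Finset.range (N0+1), π (matMul (vi i) (matStar (vi i))) := by
    conv_lhs => rw [← hsumproj]
    refine pi_sum hπ _ _ (fun i => ?_)
    rw [mul_star_self (hvi_pt i)]
    exact cuElem_diagProj _
  have hπv : π v ξ - π (matMul v (matStar v)) ξ
      = ∑ i ∈ Finset.range (N0+1), (π (vi i) ξ - π (matMul (vi i) (matStar (vi i))) ξ) := by
    rw [e1, e2, ContinuousLinearMap.sum_apply, ContinuousLinearMap.sum_apply,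
      ← Finset.sum_sub_distrib]
  have hterm : ∀ i, ‖π (vi i) ξ - π (matMul (vi i) (matStar (vi i))) ξ‖ ≤ ε + δ := by
    intro i
    have hcu_ui := cuElem_of_pt (hui_pt i)
    have hcu_si := cuElem_of_pt (hsi_pt i)
    have hcu_sisi : CuElem (matMul (si i) (matStar (si i))) := by
      rw [mul_star_self (hsi_pt i)]
      exact cuElem_diagProj _
    have hdecomp : π (vi i) ξ = π (ui i) (π (si i) ξ) := by
      rw [← hmulus i, hπ.map_mul _ _ hcu_ui hcu_si]
      exact ContinuousLinearMap.mul_apply _ _ _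
    have hmid : π (ui i) (π (matMul (si i) (matStar (si i))) ξ) = π (ui i) ξ := by
      have hmm : π (ui i) * π (matMul (si i) (matStar (si i))) = π (ui i) := by
        rw [← hπ.map_mul _ _ hcu_ui hcu_sisi, hus i]
      calc π (ui i) (π (matMul (si i) (matStar (si i))) ξ)
          = (π (ui i) * π (matMul (si i) (matStar (si i)))) ξ :=
            (ContinuousLinearMap.mul_apply _ _ _).symm
        _ = π (ui i) ξ := by rw [hmm]
    have hkey : π (vi i) ξ - π (matMul (vi i) (matStar (vi i))) ξ
        = π (ui i) (π (si i) ξ - π (matMul (si i) (matStar (si i))) ξ)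
          + (π (ui i) ξ - π (matMul (ui i) (matStar (ui i))) ξ) := by
      rw [(π (ui i)).map_sub, hdecomp, hvv_uu i, hmid]
      abel
    rw [hkey]
    refine le_trans (norm_add_le _ _) ?_
    rw [show ε + δ = δ + ε from add_comm ε δ]
    refine add_le_add ?_ ?_
    · exact le_trans (norm_pi_pt_le hπ (hui_pt i) _)
        (hFbd (si i) (hsi_pt i) (hsisub i))
    · exact hEbd (ui i) (hui_pt i) (huisub i)
  rw [hπv]
  refine le_trans (norm_sum_le _ _) ?_
  calc (∑ i ∈ Finset.range (N0+1), ‖π (vi i) ξ - π (matMul (vi i) (matStar (vi i))) ξ‖)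
      ≤ ∑ _i ∈ Finset.range (N0+1), (ε + δ) := Finset.sum_le_sum (fun i _ => hterm i)
    _ = ((N0+1 : ℕ) : ℝ) * (ε + δ) := by
        rw [Finset.sum_const, Finset.card_range, nsmul_eq_mul]

end Key

section Iter

set_option linter.unusedSectionVars false
set_option maxHeartbeats 1000000

variable {X : Type*} [EMetricSpace X]

lemma iter_decomp (hBG : BoundedGeometry X) {E : Set (X × X)} (hE : Controlled E) (n : ℕ) :
    ∃ C : ℝ, 0 ≤ C ∧ ∀ (H : Type) [NormedAddCommGroup H] [InnerProductSpace ℂ H] [CompleteSpace H]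
      (π : (X → X → ℂ) → (H →L[ℂ] H)), IsRepresentation π → ∀ (ξ : H) (ε : ℝ), 0 ≤ ε →
      (∀ u, IsPartialTranslation u → matSupport u ⊆ E →
        ‖π u ξ - π (matMul u (matStar u)) ξ‖ ≤ ε) →
      ∀ v, IsPartialTranslation v → matSupport v ⊆ compPow E n →
        ‖π v ξ - π (matMul v (matStar v)) ξ‖ ≤ C * ε := by
  induction n with
  | zero =>
    refine ⟨1, zero_le_one, ?_⟩
    intro H _ _ _ π hπ ξ ε hε hEbd v hv hsub
    rw [one_mul]
    exact hEbd v hv hsub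
  | succ n ih =>
    obtain ⟨C, hC0, hC⟩ := ih
    obtain ⟨N, hN⟩ := key_decomp hBG hE (controlled_compPow hE n)
    refine ⟨(N : ℝ) * (1 + C), by positivity, ?_⟩
    intro H _ _ _ π hπ ξ ε hε hEbd v hv hsub
    have hFbd : ∀ s, IsPartialTranslation s → matSupport s ⊆ compPow E n →
        ‖π s ξ - π (matMul s (matStar s)) ξ‖ ≤ C * ε := hC H π hπ ξ ε hε hEbd
    have hsub' : matSupport v ⊆ compRel E (compPow E n) := hsub
    have hb := hN H π hπ ξ ε (C * ε) hEbd hFbd v hv hsub'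
    calc ‖π v ξ - π (matMul v (matStar v)) ξ‖ ≤ (N : ℝ) * (ε + C * ε) := hb
      _ = (N : ℝ) * (1 + C) * ε := by ring

lemma matStar_zero : matStar (0 : X → X → ℂ) = 0 := by
  funext x y
  simp [matStar]

lemma matMul_zero : matMul (0 : X → X → ℂ) 0 = 0 := by
  funext x y
  simp [matMul]

lemma diag_add (f g : X → ℂ) : diag (f + g) = diag f + diag g := by
  funext x y
  by_cases h : x = y <;> simp [diag, h]

lemma diag_smul (c : ℂ) (f : X → ℂ) : diag (c • f) = c • diag f := by
  funext x y
  by_cases h : x = y <;> simp [diag, h]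

lemma translateFun_eq_zero {v : X → X → ℂ} (h01 : ∀ x y, v x y = 0 ∨ v x y = 1) (f : X → ℂ)
    (y : X) (h : ∀ x, v x y ≠ 1) : translateFun v f y = 0 := by
  have hz : ∀ x, v x y * f x = 0 := by
    intro x
    rcases h01 x y with h0 | h0
    · rw [h0, zero_mul]
    · exact absurd h0 (h x)
  simp only [translateFun, hz]
  exact tsum_zero

lemma translateFun_eq_of {v : X → X → ℂ} (hv : IsPartialTranslation v) (f : X → ℂ)
    {x₀ y : X} (h : v x₀ y = 1) : translateFun v f y = f x₀ := by
  have hz : ∀ x, x ≠ x₀ → v x y * f x = 0 := by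
    intro x hx
    rcases hv.1 x y with h0 | h0
    · rw [h0, zero_mul]
    · exact absurd (hv.2.2.1 x x₀ y h0 h) hx
  rw [translateFun, tsum_eq_single x₀ hz, h, one_mul]

lemma translate_diag {v : X → X → ℂ} (hv : IsPartialTranslation v) (f : X → ℂ) :
    diag (translateFun v f) = matMul (matStar v) (matMul (diag f) v) := by
  rw [matMul_diag_left]
  funext y y'
  simp only [matMul, matStar]
  by_cases hy : ∃ x₀, v x₀ y = 1
  · obtain ⟨x₀, hx₀⟩ := hy
    have hz : ∀ x, x ≠ x₀ → starRingEnd ℂ (v x y) * (f x * v x y') = 0 := by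
      intro x hx
      rcases hv.1 x y with h0 | h0
      · rw [h0, map_zero, zero_mul]
      · exact absurd (hv.2.2.1 x x₀ y h0 hx₀) hx
    rw [tsum_eq_single x₀ hz, hx₀, map_one, one_mul]
    by_cases hyy : y = y'
    · subst hyy
      rw [hx₀, mul_one, diag, if_pos rfl, translateFun_eq_of hv f hx₀]
    · have h0 : v x₀ y' = 0 := by
        rcases hv.1 x₀ y' with h0 | h0
        · exact h0
        · exact absurd (hv.2.1 x₀ y y' hx₀ h0) hyy
      rw [h0, mul_zero, diag, if_neg hyy]
  · have hz : ∀ x, starRingEnd ℂ (v x y) * (f x * v x y') = 0 := by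
      intro x
      rcases hv.1 x y with h0 | h0
      · rw [h0, map_zero, zero_mul]
      · exact absurd ⟨x, h0⟩ hy
    have h1 : (∑' x, starRingEnd ℂ (v x y) * (f x * v x y')) = 0 := by
      simp only [hz]
      exact tsum_zero
    rw [h1]
    by_cases hyy : y = y'
    · subst hyy
      rw [diag, if_pos rfl, translateFun_eq_zero hv.1 f y (fun x hx => hy ⟨x, hx⟩)]
    · rw [diag, if_neg hyy]

lemma diag_absorb_left {f : X → ℂ} {S : Set X} (h : ∀ x, f x ≠ 0 → x ∈ S) :
    matMul (diagProj S) (diag f) = diag f := by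
  rw [diagProj, diag_mul_diag]
  funext a b
  by_cases hab : a = b
  · subst hab
    by_cases hf : f a = 0
    · simp [diag, chi, hf]
    · simp [diag, chi, h a hf]
  · simp [diag, hab]

lemma diag_absorb_right {f : X → ℂ} {S : Set X} (h : ∀ x, f x ≠ 0 → x ∈ S) :
    matMul (diag f) (diagProj S) = diag f := by
  rw [diagProj, diag_mul_diag]
  funext a b
  by_cases hab : a = b
  · subst hab
    by_cases hf : f a = 0
    · simp [diag, chi, hf]
    · simp [diag, chi, h a hf]
  · simp [diag, hab]

end Iter

set_option maxHeartbeats 1000000 in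
/-- A space without Property (T) is amenable. -/
theorem statement7 {X : Type*} [EMetricSpace X] (hX : IsSpace X)
    (h : ¬ HasPropertyT X) : IsAmenable X := by
  classical
  unfold HasPropertyT at h
  push_neg at h
  obtain ⟨E, hGenE, h2⟩ := h
  have hEc : Controlled E := hGenE.1
  -- witnesses: almost invariant unit vectors
  have hwit : ∀ c : ℝ, 0 < c → ∃ Wr : HilbertRep X, ∃ ξ : Wr.H, ‖ξ‖ = 1 ∧
      ∀ v, IsPartialTranslation v → matSupport v ⊆ E →
        ‖Wr.π v ξ - Wr.π (matMul v (matStar v)) ξ‖ < c := by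
    intro c hc
    obtain ⟨H, i1, i2, i3, π, hrep, ξ, _, hsmall⟩ := h2 c hc
    letI := i1; letI := i2; letI := i3
    have hz := hsmall 0 pt_zero (fun p hp => absurd rfl hp)
    rw [matStar_zero, matMul_zero, pi_zero hrep] at hz
    simp only [ContinuousLinearMap.zero_apply, sub_zero, norm_zero] at hz
    have hξpos : 0 < ‖ξ‖ := by nlinarith [norm_nonneg ξ, hz]
    set a : ℂ := ((‖ξ‖⁻¹ : ℝ) : ℂ) with ha
    have hna : ‖a‖ = ‖ξ‖⁻¹ := by
      rw [ha, Complex.norm_real, Real.norm_eq_abs, abs_of_nonneg (by positivity)]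
    refine ⟨HilbertRep.mk H π hrep, a • ξ, ?_, ?_⟩
    · rw [norm_smul, hna, inv_mul_cancel₀ (ne_of_gt hξpos)]
    · intro v hv hsub
      have hlt := hsmall v hv hsub
      have hsp : π v (a • ξ) - π (matMul v (matStar v)) (a • ξ)
          = a • (π v ξ - π (matMul v (matStar v)) ξ) := by
        rw [(π v).map_smul, (π (matMul v (matStar v))).map_smul, smul_sub]
      show ‖π v (a • ξ) - π (matMul v (matStar v)) (a • ξ)‖ < c
      rw [hsp, norm_smul, hna]
      calc ‖ξ‖⁻¹ * ‖π v ξ - π (matMul v (matStar v)) ξ‖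
          < ‖ξ‖⁻¹ * (c * ‖ξ‖) := by
            exact mul_lt_mul_of_pos_left hlt (by positivity)
        _ = c := by field_simp
  have hmain : ∀ n : ℕ, ∃ Wr : HilbertRep X, ∃ ξ : Wr.H, ‖ξ‖ = 1 ∧
      ∀ v, IsPartialTranslation v → matSupport v ⊆ E →
        ‖Wr.π v ξ - Wr.π (matMul v (matStar v)) ξ‖ < 1/((n:ℝ)+1) :=
    fun n => hwit (1/((n:ℝ)+1)) (by positivity)
  choose W ξw hnorm hsmall using hmain
  set U : Ultrafilter ℕ := Ultrafilter.of Filter.atTop with hU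
  set φn : (X → ℂ) → ℕ → ℂ :=
    fun f n => @inner ℂ _ _ (ξw n) ((W n).π (diag f) (ξw n)) with hφn
  -- uniform bound
  have hbound : ∀ (f : X → ℂ) (M : ℝ), 0 ≤ M → (∀ x, ‖f x‖ ≤ M) →
      ∀ n, ‖φn f n‖ ≤ M := by
    intro f M hM hf n
    calc ‖φn f n‖ ≤ ‖ξw n‖ * ‖(W n).π (diag f) (ξw n)‖ := norm_inner_le_norm _ _
      _ ≤ 1 * (M * 1) := by
          rw [hnorm n, one_mul]
          have := norm_pi_diag_le (W n).rep hM hf (ξw n)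
          rw [hnorm n] at this
          linarith
      _ = M := by ring
  -- limits exist for bounded functions
  have hlim : ∀ f : X → ℂ, BddFun f → ∃ x : ℂ, Filter.Tendsto (φn f) ↑U (nhds x) := by
    intro f hf
    obtain ⟨M, hM⟩ := hf
    have hM' : ∀ x, ‖f x‖ ≤ max M 0 := fun x => le_trans (hM x) (le_max_left _ _)
    have hball : Metric.closedBall (0:ℂ) (max M 0) ∈ Ultrafilter.map (φn f) U := by
      rw [Ultrafilter.mem_map]
      refine Filter.univ_mem' (fun n => ?_)
      rw [Set.mem_preimage, Metric.mem_closedBall, dist_zero_right]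
      exact hbound f (max M 0) (le_max_right _ _) hM' n
    obtain ⟨x, _, hx⟩ := (isCompact_closedBall (0:ℂ) (max M 0)).ultrafilter_le_nhds
      (Ultrafilter.map (φn f) U) (Filter.le_principal_iff.2 hball)
    refine ⟨x, ?_⟩
    rw [Filter.Tendsto, ← Ultrafilter.coe_map]
    exact hx
  set φ : (X → ℂ) → ℂ := fun f =>
    if hf : ∃ x : ℂ, Filter.Tendsto (φn f) ↑U (nhds x) then hf.choose else 0 with hφ
  have htd : ∀ f : X → ℂ, BddFun f → Filter.Tendsto (φn f) ↑U (nhds (φ f)) := by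
    intro f hf
    have he := hlim f hf
    rw [hφ]
    simp only [dif_pos he]
    exact he.choose_spec
  refine ⟨φ, ?_, ?_, ?_, ?_, ?_⟩
  -- additivity
  · intro f g hf hg
    have heq : ∀ n, φn (f + g) n = φn f n + φn g n := by
      intro n
      show @inner ℂ _ _ _ _ = _
      rw [diag_add, (W n).rep.map_add _ _ (cuElem_diag hf) (cuElem_diag hg),
        ContinuousLinearMap.add_apply, inner_add_right]
    have hfg : BddFun (f + g) := by
      obtain ⟨M, hM⟩ := hf
      obtain ⟨M', hM'⟩ := hg
      refine ⟨M + M', fun x => ?_⟩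
      calc ‖(f + g) x‖ ≤ ‖f x‖ + ‖g x‖ := by
            simpa using norm_add_le (f x) (g x)
        _ ≤ M + M' := add_le_add (hM x) (hM' x)
    have h1 := htd (f + g) hfg
    have h2 := (htd f hf).add (htd g hg)
    rw [show φn (f + g) = fun n => φn f n + φn g n from funext heq] at h1
    exact tendsto_nhds_unique h1 h2
  -- homogeneity
  · intro c f hf
    have heq : ∀ n, φn (c • f) n = c * φn f n := by
      intro n
      show @inner ℂ _ _ _ _ = _
      rw [diag_smul, (W n).rep.map_smul _ _ (cuElem_diag hf),
        ContinuousLinearMap.smul_apply, inner_smul_right]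
    have hcf : BddFun (c • f) := by
      obtain ⟨M, hM⟩ := hf
      refine ⟨‖c‖ * M, fun x => ?_⟩
      rw [Pi.smul_apply, smul_eq_mul, norm_mul]
      exact mul_le_mul_of_nonneg_left (hM x) (norm_nonneg c)
    have h1 := htd (c • f) hcf
    have h2 := (htd f hf).const_mul c
    rw [show φn (c • f) = fun n => c * φn f n from funext heq] at h1
    exact tendsto_nhds_unique h1 h2
  -- unital
  · have heq : ∀ n, φn (fun _ => 1) n = 1 := by
      intro n
      show @inner ℂ _ _ _ _ = _
      have hd1 : diag (fun _ : X => (1:ℂ)) = matOne := rfl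
      rw [hd1, (W n).rep.map_one, ContinuousLinearMap.one_apply,
        inner_self_eq_norm_sq_to_K, hnorm n]
      norm_num
    have h1 := htd (fun _ => 1) ⟨1, fun x => by simp⟩
    rw [show φn (fun _ => 1) = fun _ => 1 from funext heq] at h1
    exact tendsto_nhds_unique h1 tendsto_const_nhds
  -- positivity
  · intro f hf hpos
    set g : X → ℝ := fun x => Real.sqrt ((f x).re) with hg
    have hfx : ∀ x, f x = ((g x : ℂ)) * ((g x : ℂ)) := by
      intro x
      rw [← Complex.ofReal_mul, hg, Real.mul_self_sqrt (hpos x).1]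
      exact (Complex.ext (by simp) (by simp [(hpos x).2])).symm
    obtain ⟨M, hM⟩ := hf
    have hgb : ∃ M', ∀ x, ‖(g x : ℂ)‖ ≤ M' := by
      refine ⟨Real.sqrt (max M 0), fun x => ?_⟩
      rw [Complex.norm_real, Real.norm_eq_abs, abs_of_nonneg (Real.sqrt_nonneg _)]
      apply Real.sqrt_le_sqrt
      calc (f x).re ≤ ‖f x‖ := Complex.re_le_norm _
        _ ≤ max M 0 := le_trans (hM x) (le_max_left _ _)
    have heq : ∀ n, φn f n
        = ((‖(W n).π (diag (fun x => ((g x : ℂ)))) (ξw n)‖ : ℝ) : ℂ) ^ 2 := by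
      intro n
      show @inner ℂ _ _ _ _ = _
      set A := (W n).π (diag (fun x => ((g x : ℂ)))) with hA
      have hGmat : diag f = matMul (diag (fun x => ((g x : ℂ)))) (diag (fun x => ((g x : ℂ)))) := by
        rw [diag_mul_diag]
        exact congrArg diag (funext hfx)
      have hadjA : ContinuousLinearMap.adjoint A = A := by
        rw [hA, ← (W n).rep.map_star _ (cuElem_diag hgb), matStar_diag]
        congr 1
        exact congrArg diag (funext fun x => Complex.conj_ofReal _)
      rw [hGmat, (W n).rep.map_mul _ _ (cuElem_diag hgb) (cuElem_diag hgb),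
        ContinuousLinearMap.mul_apply]
      calc @inner ℂ _ _ (ξw n) (A (A (ξw n)))
          = @inner ℂ _ _ (ξw n) (ContinuousLinearMap.adjoint A (A (ξw n))) := by rw [hadjA]
        _ = @inner ℂ _ _ (A (ξw n)) (A (ξw n)) := ContinuousLinearMap.adjoint_inner_right _ _ _
        _ = ((‖A (ξw n)‖ : ℝ) : ℂ) ^ 2 := inner_self_eq_norm_sq_to_K _
    have htdf := htd f ⟨M, hM⟩
    constructor
    · have hre : Filter.Tendsto (fun n => (φn f n).re) ↑U (nhds (φ f).re) :=
        (Complex.continuous_re.tendsto _).comp htdf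
      refine ge_of_tendsto hre (Filter.Eventually.of_forall (fun n => ?_))
      rw [heq n, ← Complex.ofReal_pow, Complex.ofReal_re]
      positivity
    · have him : Filter.Tendsto (fun n => (φn f n).im) ↑U (nhds (φ f).im) :=
        (Complex.continuous_im.tendsto _).comp htdf
      have hzero : (fun n => (φn f n).im) = fun _ => (0:ℝ) := by
        funext n
        rw [heq n, ← Complex.ofReal_pow, Complex.ofReal_im]
      rw [hzero] at him
      exact tendsto_nhds_unique him tendsto_const_nhds
  -- invariance
  · intro f hf v hv hcond
    obtain ⟨M0, hM0⟩ := hf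
    set M : ℝ := max M0 0 with hMdef
    have hM : ∀ x, ‖f x‖ ≤ M := fun x => le_trans (hM0 x) (le_max_left _ _)
    have hMpos : 0 ≤ M := le_max_right _ _
    have htfb : ∀ y, ‖translateFun v f y‖ ≤ M := by
      intro y
      by_cases hy : ∃ x, v x y = 1
      · obtain ⟨x₀, h1⟩ := hy
        rw [translateFun_eq_of hv f h1]
        exact hM x₀
      · rw [translateFun_eq_zero hv.1 f y (fun x hx => hy ⟨x, hx⟩)]
        simpa using hMpos
    obtain ⟨m, hm⟩ := hGenE.2 (matSupport v) hv.2.2.2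
    obtain ⟨C, hC0, hC⟩ := iter_decomp hX.boundedGeometry hEc m
    have hcond' : ∀ x, f x ≠ 0 → x ∈ rowSet v := hcond
    have hdiff : ∀ n : ℕ, ‖φn (translateFun v f) n - φn f n‖
        ≤ 2 * M * (C * (1/((n:ℝ)+1))) := by
      intro n
      set ξ := ξw n with hξdef
      set π := (W n).π with hπdef
      have hrep : IsRepresentation π := by rw [hπdef]; exact (W n).rep
      have hEbd : ∀ u, IsPartialTranslation u → matSupport u ⊆ E →
          ‖π u ξ - π (matMul u (matStar u)) ξ‖ ≤ 1/((n:ℝ)+1) :=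
        fun u hu hsu => le_of_lt (hsmall n u hu hsu)
      have herr := hC (W n).H π hrep ξ (1/((n:ℝ)+1)) (by positivity) hEbd v hv hm
      set p : X → X → ℂ := matMul v (matStar v) with hp
      have hpd : p = diagProj (rowSet v) := mul_star_self hv
      have hcup : CuElem p := by rw [hpd]; exact cuElem_diagProj _
      have hpstar : matStar p = p := by rw [hpd, matStar_diagProj]
      have hcuD : CuElem (diag f) := cuElem_diag ⟨M, hM⟩
      have hadjp : ContinuousLinearMap.adjoint (π p) = π p := by
        rw [← hrep.map_star _ hcup, hpstar]
      -- first formula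
      have htf : φn (translateFun v f) n = @inner ℂ _ _ (π v ξ) (π (diag f) (π v ξ)) := by
        show @inner ℂ _ _ ξ (π (diag (translateFun v f)) ξ) = _
        rw [translate_diag hv f]
        have hcuW2 : CuElem (matMul (diag f) v) := by
          rw [matMul_diag_left]
          constructor
          · refine ⟨M, fun x y => ?_⟩
            rw [norm_mul]
            rcases hv.1 x y with h0 | h0
            · rw [h0]; simpa using hMpos
            · rw [h0]; simpa using hM x
          · refine controlled_mono ?_ hv.2.2.2
            intro q hq
            have : f q.1 * v q.1 q.2 ≠ 0 := hq
            exact right_ne_zero_of_mul this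
        rw [hrep.map_mul _ _ (cuElem_of_pt (pt_star hv)) hcuW2,
          ContinuousLinearMap.mul_apply,
          hrep.map_mul _ _ hcuD (cuElem_of_pt hv), ContinuousLinearMap.mul_apply,
          hrep.map_star _ (cuElem_of_pt hv)]
        exact ContinuousLinearMap.adjoint_inner_right _ _ _
      -- second formula
      have habs1 : matMul (diag f) p = diag f := by rw [hpd]; exact diag_absorb_right hcond'
      have habs2 : matMul p (diag f) = diag f := by rw [hpd]; exact diag_absorb_left hcond'
      have hDp : π (diag f) (π p ξ) = π (diag f) ξ := by
        have := congrArg (fun (B : _ →L[ℂ] _) => B ξ)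
          ((hrep.map_mul _ _ hcuD hcup).symm.trans (congrArg π habs1))
        simpa [ContinuousLinearMap.mul_apply] using this
      have hpD : π p (π (diag f) ξ) = π (diag f) ξ := by
        have := congrArg (fun (B : _ →L[ℂ] _) => B ξ)
          ((hrep.map_mul _ _ hcup hcuD).symm.trans (congrArg π habs2))
        simpa [ContinuousLinearMap.mul_apply] using this
      have hff : φn f n = @inner ℂ _ _ (π p ξ) (π (diag f) (π p ξ)) := by
        show @inner ℂ _ _ ξ (π (diag f) ξ) = _
        rw [hDp]
        calc @inner ℂ _ _ ξ (π (diag f) ξ) = @inner ℂ _ _ ξ (π p (π (diag f) ξ)) := by rw [hpD]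
          _ = @inner ℂ _ _ (ContinuousLinearMap.adjoint (π p) ξ) (π (diag f) ξ) :=
              (ContinuousLinearMap.adjoint_inner_left _ _ _).symm
          _ = @inner ℂ _ _ (π p ξ) (π (diag f) ξ) := by rw [hadjp]
      -- estimate
      have hη1 : ‖π v ξ‖ ≤ 1 := by
        have := norm_pi_pt_le hrep hv ξ
        rwa [hξdef, hnorm n] at this
      have hζ1 : ‖π p ξ‖ ≤ 1 := by
        have h0 : ‖π (diagProj (rowSet v)) ξ‖ ≤ ‖ξ‖ := norm_pi_diagProj_le hrep _ ξ
        rw [← hpd] at h0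
        rwa [hξdef, hnorm n] at h0
      have hsplit : φn (translateFun v f) n - φn f n
          = @inner ℂ _ _ (π v ξ - π p ξ) (π (diag f) (π v ξ))
            + @inner ℂ _ _ (π p ξ) (π (diag f) (π v ξ) - π (diag f) (π p ξ)) := by
        rw [htf, hff, inner_sub_left, inner_sub_right]
        ring
      have e1 : ‖π v ξ - π p ξ‖ ≤ C * (1/((n:ℝ)+1)) := herr
      have e2 : ‖π (diag f) (π v ξ)‖ ≤ M := by
        calc ‖π (diag f) (π v ξ)‖ ≤ M * ‖π v ξ‖ := norm_pi_diag_le hrep hMpos hM _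
          _ ≤ M * 1 := mul_le_mul_of_nonneg_left hη1 hMpos
          _ = M := mul_one M
      have e3 : ‖π (diag f) (π v ξ) - π (diag f) (π p ξ)‖ ≤ M * (C * (1/((n:ℝ)+1))) := by
        rw [← (π (diag f)).map_sub]
        calc ‖π (diag f) (π v ξ - π p ξ)‖ ≤ M * ‖π v ξ - π p ξ‖ :=
              norm_pi_diag_le hrep hMpos hM _
          _ ≤ M * (C * (1/((n:ℝ)+1))) := mul_le_mul_of_nonneg_left e1 hMpos
      calc ‖φn (translateFun v f) n - φn f n‖
          = ‖@inner ℂ _ _ (π v ξ - π p ξ) (π (diag f) (π v ξ))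
            + @inner ℂ _ _ (π p ξ) (π (diag f) (π v ξ) - π (diag f) (π p ξ))‖ := by
            rw [hsplit]
        _ ≤ ‖@inner ℂ _ _ (π v ξ - π p ξ) (π (diag f) (π v ξ))‖
            + ‖@inner ℂ _ _ (π p ξ) (π (diag f) (π v ξ) - π (diag f) (π p ξ))‖ :=
            norm_add_le _ _
        _ ≤ ‖π v ξ - π p ξ‖ * ‖π (diag f) (π v ξ)‖
            + ‖π p ξ‖ * ‖π (diag f) (π v ξ) - π (diag f) (π p ξ)‖ :=
            add_le_add (norm_inner_le_norm _ _) (norm_inner_le_norm _ _)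
        _ ≤ (C * (1/((n:ℝ)+1))) * M + 1 * (M * (C * (1/((n:ℝ)+1)))) := by
            refine add_le_add ?_ ?_
            · exact mul_le_mul e1 e2 (norm_nonneg _) (by positivity)
            · exact mul_le_mul hζ1 e3 (norm_nonneg _) zero_le_one
        _ = 2 * M * (C * (1/((n:ℝ)+1))) := by ring
    have hb : Filter.Tendsto (fun n : ℕ => 2 * M * (C * (1/((n:ℝ)+1)))) Filter.atTop (nhds 0) := by
      have h1 := tendsto_one_div_add_atTop_nhds_zero_nat.const_mul (2 * M * C)
      have h2 : (fun n : ℕ => 2 * M * (C * (1/((n:ℝ)+1))))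
          = fun n : ℕ => (2 * M * C) * (1/((n:ℝ)+1)) := by
        funext n
        ring
      rw [h2]
      simpa using h1
    have hzero : Filter.Tendsto (fun n => φn (translateFun v f) n - φn f n)
        Filter.atTop (nhds 0) := squeeze_zero_norm hdiff hb
    have hzeroU : Filter.Tendsto (fun n => φn (translateFun v f) n - φn f n)
        ↑U (nhds 0) := hzero.mono_left (Ultrafilter.of_le _)
    have h1 : Filter.Tendsto (φn (translateFun v f)) ↑U (nhds (φ f)) := by
      have hr : φn (translateFun v f)
          = fun n => (φn (translateFun v f) n - φn f n) + φn f n := funext fun n => by ring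
      rw [hr]
      simpa using hzeroU.add (htd f ⟨M, hM⟩)
    exact tendsto_nhds_unique (htd (translateFun v f) ⟨M, htfb⟩) h1

end GeomPropT
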